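/- Let M ≥ 1 and K ≥ 2 be integers, and let z ~ Gamma(M,1) and u ~ Exp(K−1) be independent. For every t > 0, P( z > u and u > t ) = ( Γ(M, t) · e^{−(K−1)t} − K^{−M} · Γ(M, Kt) ) / (M−1)!. Equivalently, the quantity Q₅ = P(z < u) + P(z > u, u < t) appearing in the secrecy outage probability equals 1 − Γ(M,t)e^{−(K−1)t}/(M−1)! + K^{−M}Γ(M,Kt)/(M−1)!. -/

import Mathlib

open Real MeasureTheory ProbabilityTheory

open Set

lemma myIntOn (n : ℕ) {c t : ℝ} (hc : 0 < c) (ht : 0 ≤ t) :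
    IntegrableOn (fun x : ℝ => x ^ n * Real.exp (-(c * x))) (Set.Ioi t) := by
  have h := integrableOn_rpow_mul_exp_neg_mul_rpow (p := 1) (s := (n : ℝ)) (b := c)
    (by exact_mod_cast neg_one_lt_zero.trans_le (Nat.cast_nonneg n)) zero_lt_one hc
  simp only [Real.rpow_one, Real.rpow_natCast, neg_mul] at h
  exact h.mono_set (Set.Ioi_subset_Ioi ht)

lemma myIntOn1 (n : ℕ) {t : ℝ} (ht : 0 ≤ t) :
    IntegrableOn (fun x : ℝ => x ^ n * Real.exp (-x)) (Set.Ioi t) := by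
  simpa using myIntOn n one_pos ht

lemma expTail {b : ℝ} (hb : 0 < b) (x : ℝ) :
    ∫ y in Set.Ioi x, b * Real.exp (-(b * y)) = Real.exp (-(b * x)) := by
  rw [MeasureTheory.integral_const_mul]
  have h := MeasureTheory.integral_comp_mul_left_Ioi (fun y => Real.exp (-y)) x hb
  rw [integral_exp_neg_Ioi] at h
  rw [h, smul_eq_mul, ← mul_assoc, mul_inv_cancel₀ hb.ne', one_mul]

lemma expM_Ioi {b : ℝ} (hb : 0 < b) {x : ℝ} (hx : 0 ≤ x) :
    expMeasure b (Set.Ioi x) = ENNReal.ofReal (Real.exp (-(b * x))) := by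
  rw [expMeasure, gammaMeasure, withDensity_apply _ measurableSet_Ioi]
  have h1 : ∫⁻ y in Ioi x, gammaPDF 1 b y
      = ∫⁻ y in Ioi x, ENNReal.ofReal (b * Real.exp (-(b * y))) := by
    refine setLIntegral_congr_fun measurableSet_Ioi (fun y hy => ?_)
    rw [show gammaPDF 1 b y = exponentialPDF b y from rfl,
      exponentialPDF_of_nonneg (hx.trans (le_of_lt hy))]
  rw [h1, ← ofReal_integral_eq_lintegral_ofReal, expTail hb]
  · have := (exp_neg_integrableOn_Ioi x hb).const_mul b
    simpa [neg_mul] using this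
  · exact ae_of_all _ fun y => by positivity

lemma expM_sing {b : ℝ} (x : ℝ) : expMeasure b {x} = 0 := by
  rw [expMeasure, gammaMeasure]
  exact (withDensity_absolutelyContinuous _ _) (measure_singleton x)

lemma expM_Ioo {b : ℝ} (hb : 0 < b) {t : ℝ} (ht : 0 ≤ t) (z : ℝ) :
    expMeasure b (Set.Ioo t z)
      = ENNReal.ofReal (Real.exp (-(b * t)) - Real.exp (-(b * z))) := by
  rcases le_or_gt z t with hz | hz
  · rw [Set.Ioo_eq_empty (by exact fun h => absurd h (not_lt.mpr hz)), measure_empty,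
      eq_comm, ENNReal.ofReal_eq_zero]
    have : Real.exp (-(b * t)) ≤ Real.exp (-(b * z)) :=
      Real.exp_le_exp.mpr (by nlinarith)
    linarith
  · have hz0 : 0 ≤ z := ht.trans hz.le
    have hIci : expMeasure b (Set.Ici z) = ENNReal.ofReal (Real.exp (-(b * z))) := by
      rw [← Set.Ioi_insert, Set.insert_eq,
        measure_union (Set.disjoint_left.mpr fun a ha hb' =>
          absurd hb' (by simp_all)) measurableSet_Ioi,
        expM_sing, zero_add, expM_Ioi hb hz0]
    have hsplit : Set.Ioo t z ∪ Set.Ici z = Set.Ioi t := Set.Ioo_union_Ici_eq_Ioi hz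
    have hdisj : Disjoint (Set.Ioo t z) (Set.Ici z) :=
      Set.disjoint_left.mpr fun a ha hb' => absurd hb' (not_le.mpr ha.2)
    have hu := measure_union (μ := expMeasure b) hdisj measurableSet_Ici
    rw [hsplit, expM_Ioi hb ht, hIci] at hu
    rw [ENNReal.ofReal_sub _ (Real.exp_nonneg _)]
    exact ENNReal.eq_sub_of_add_eq ENNReal.ofReal_ne_top hu.symm

lemma gammaPDF_nat {M : ℕ} (hM : 1 ≤ M) {z : ℝ} (hz : 0 ≤ z) :
    gammaPDF M 1 z
      = ENNReal.ofReal (z ^ (M - 1) * Real.exp (-z) * (((M - 1).factorial : ℝ))⁻¹) := by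
  rw [gammaPDF_of_nonneg hz]
  congr 1
  have h1 : ((M : ℝ)) = ((M - 1 : ℕ) : ℝ) + 1 := by
    rw [Nat.cast_sub hM]
    push_cast
    ring
  rw [h1, Real.Gamma_nat_eq_factorial, Real.one_rpow, add_sub_cancel_right,
    Real.rpow_natCast]
  ring

lemma funsplit (M K : ℕ) (t : ℝ) :
    (fun z : ℝ => z ^ (M - 1) * Real.exp (-z) * (((M - 1).factorial : ℝ))⁻¹ *
        (Real.exp (-(((K : ℝ) - 1) * t)) - Real.exp (-(((K : ℝ) - 1) * z))))
      = fun z : ℝ => ((((M - 1).factorial : ℝ))⁻¹ * Real.exp (-(((K : ℝ) - 1) * t))) *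
          (z ^ (M - 1) * Real.exp (-z))
        - (((M - 1).factorial : ℝ))⁻¹ * (z ^ (M - 1) * Real.exp (-((K : ℝ) * z))) := by
  funext z
  have h2 : Real.exp (-z) * Real.exp (-(((K : ℝ) - 1) * z)) = Real.exp (-((K : ℝ) * z)) := by
    rw [← Real.exp_add]; congr 1; ring
  linear_combination (-(((M - 1).factorial : ℝ))⁻¹ * z ^ (M - 1)) * h2

lemma subst_int (M K : ℕ) (hM : 1 ≤ M) {Kr : ℝ} (hK0 : 0 < Kr) (Γup : ℝ → ℝ)
    (hΓ : ∀ s, Γup s = ∫ r in Set.Ioi s, r ^ (M - 1) * Real.exp (-r)) (t : ℝ) :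
    ∫ z in Set.Ioi t, z ^ (M - 1) * Real.exp (-(Kr * z))
      = (Kr ^ M)⁻¹ * Γup (Kr * t) := by
  have h := MeasureTheory.integral_comp_mul_left_Ioi
    (fun x => x ^ (M - 1) * Real.exp (-x)) t hK0
  rw [smul_eq_mul, ← hΓ] at h
  have hl : ∀ x : ℝ, (Kr * x) ^ (M - 1) * Real.exp (-(Kr * x))
      = Kr ^ (M - 1) * (x ^ (M - 1) * Real.exp (-(Kr * x))) := fun x => by
    rw [mul_pow]; ring
  simp_rw [hl, MeasureTheory.integral_const_mul] at h
  have hpow : Kr ^ (M - 1) * Kr = Kr ^ M := by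
    rw [← pow_succ]; congr 1; omega
  have hne : Kr ^ (M - 1) ≠ 0 := pow_ne_zero _ hK0.ne'
  field_simp at h ⊢
  linear_combination h - (∫ z in Set.Ioi t, z ^ (M - 1) * Real.exp (-(Kr * z))) * hpow

lemma keyC (M K : ℕ) (hM : 1 ≤ M) (hK : 2 ≤ K) (Γup : ℝ → ℝ)
    (hΓ : ∀ s, Γup s = ∫ r in Set.Ioi s, r ^ (M - 1) * Real.exp (-r))
    (t : ℝ) (ht : 0 < t) :
    (((gammaMeasure M 1).prod (expMeasure ((K : ℝ) - 1)))
        {p : ℝ × ℝ | p.2 < p.1 ∧ t < p.2}).toReal =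
      (Γup t * Real.exp (-((K : ℝ) - 1) * t) - ((K : ℝ) ^ M)⁻¹ * Γup (K * t)) /
        (M - 1).factorial := by
  have hK2 : (2 : ℝ) ≤ (K : ℝ) := by exact_mod_cast hK
  have hlam : (0 : ℝ) < (K : ℝ) - 1 := by linarith
  have hK0 : (0 : ℝ) < (K : ℝ) := by linarith
  haveI : IsProbabilityMeasure (expMeasure ((K : ℝ) - 1)) :=
    isProbabilityMeasure_expMeasure hlam
  have hmeas : MeasurableSet {p : ℝ × ℝ | p.2 < p.1 ∧ t < p.2} :=
    (measurableSet_lt measurable_snd measurable_fst).inter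
      (measurableSet_lt measurable_const measurable_snd)
  rw [Measure.prod_apply hmeas]
  have hslice : ∀ z : ℝ, (Prod.mk z ⁻¹' {p : ℝ × ℝ | p.2 < p.1 ∧ t < p.2})
      = Set.Ioo t z := by
    intro z; ext u
    simp only [Set.mem_preimage, Set.mem_setOf_eq, Set.mem_Ioo]
    tauto
  simp_rw [hslice, expM_Ioo hlam ht.le]
  have hf : Measurable (gammaPDF M 1) := (measurable_gammaPDFReal M 1).ennreal_ofReal
  have hg : Measurable fun z : ℝ => ENNReal.ofReal
      (Real.exp (-(((K : ℝ) - 1) * t)) - Real.exp (-(((K : ℝ) - 1) * z))) :=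
    (measurable_const.sub ((measurable_const_mul _).neg.exp)).ennreal_ofReal
  rw [gammaMeasure, lintegral_withDensity_eq_lintegral_mul _ hf hg]
  simp only [Pi.mul_apply]
  rw [← lintegral_add_compl
    (fun z => gammaPDF M 1 z *
      ENNReal.ofReal (Real.exp (-(((K : ℝ) - 1) * t)) - Real.exp (-(((K : ℝ) - 1) * z))))
    (measurableSet_Ioi (a := t))]
  have hcompl : ∫⁻ z in (Set.Ioi t)ᶜ, gammaPDF M 1 z *
      ENNReal.ofReal (Real.exp (-(((K : ℝ) - 1) * t)) - Real.exp (-(((K : ℝ) - 1) * z))) = 0 := by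
    rw [compl_Ioi]
    rw [setLIntegral_congr_fun measurableSet_Iic (fun z (hz : z ≤ t) => ?_),
      lintegral_zero]
    have hle : Real.exp (-(((K : ℝ) - 1) * t)) ≤ Real.exp (-(((K : ℝ) - 1) * z)) :=
      Real.exp_le_exp.mpr (by nlinarith)
    rw [ENNReal.ofReal_of_nonpos (by linarith), mul_zero]
  rw [hcompl, add_zero]
  have hnn : ∀ z ∈ Set.Ioi t, 0 ≤ z ^ (M - 1) * Real.exp (-z) * (((M - 1).factorial : ℝ))⁻¹ *
      (Real.exp (-(((K : ℝ) - 1) * t)) - Real.exp (-(((K : ℝ) - 1) * z))) := by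
    intro z hz
    have hz' : t < z := hz
    have hle : Real.exp (-(((K : ℝ) - 1) * z)) ≤ Real.exp (-(((K : ℝ) - 1) * t)) :=
      Real.exp_le_exp.mpr (by nlinarith)
    have h1 : (0:ℝ) ≤ z ^ (M - 1) * Real.exp (-z) * (((M - 1).factorial : ℝ))⁻¹ := by
      have : (0:ℝ) ≤ z := le_of_lt (ht.trans hz')
      positivity
    exact mul_nonneg h1 (by linarith)
  have hint : IntegrableOn
      (fun z : ℝ => z ^ (M - 1) * Real.exp (-z) * (((M - 1).factorial : ℝ))⁻¹ *
        (Real.exp (-(((K : ℝ) - 1) * t)) - Real.exp (-(((K : ℝ) - 1) * z))))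
      (Set.Ioi t) := by
    rw [funsplit M K t]
    exact ((myIntOn1 (M - 1) ht.le).const_mul _).sub ((myIntOn (M - 1) hK0 ht.le).const_mul _)
  have hmain : ∫⁻ z in Set.Ioi t, gammaPDF M 1 z *
      ENNReal.ofReal (Real.exp (-(((K : ℝ) - 1) * t)) - Real.exp (-(((K : ℝ) - 1) * z)))
      = ENNReal.ofReal (∫ z in Set.Ioi t,
          z ^ (M - 1) * Real.exp (-z) * (((M - 1).factorial : ℝ))⁻¹ *
            (Real.exp (-(((K : ℝ) - 1) * t)) - Real.exp (-(((K : ℝ) - 1) * z)))) := by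
    rw [setLIntegral_congr_fun measurableSet_Ioi (fun z (hz : t < z) => ?_)]
    · exact (ofReal_integral_eq_lintegral_ofReal hint
        ((ae_restrict_iff' measurableSet_Ioi).mpr (ae_of_all _ hnn))).symm
    · have hz0 : (0:ℝ) ≤ z := (ht.trans hz).le
      rw [gammaPDF_nat hM hz0, ← ENNReal.ofReal_mul (by positivity)]
  rw [hmain, ENNReal.toReal_ofReal
    (setIntegral_nonneg measurableSet_Ioi hnn)]
  rw [funsplit M K t, integral_sub ((myIntOn1 (M - 1) ht.le).const_mul _)
    ((myIntOn (M - 1) hK0 ht.le).const_mul _),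
    MeasureTheory.integral_const_mul, MeasureTheory.integral_const_mul, ← hΓ,
    subst_int M K hM hK0 Γup hΓ t]
  rw [div_eq_mul_inv]
  ring


/-- for independent `z ~ Gamma(M,1)` and `u ~ Exp(K−1)` and `t > 0`,
`P(z > u ∧ u > t) = (Γ(M,t)·e^{−(K−1)t} − K^{−M}·Γ(M,Kt))/(M−1)!`; equivalently the
term `Q₅ = P(z < u) + P(z > u ∧ u < t)` of the secrecy outage probability equals
`1 − Γ(M,t)e^{−(K−1)t}/(M−1)! + K^{−M}Γ(M,Kt)/(M−1)!`. -/
theorem secrecy_outage_Q5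
    (M K : ℕ) (hM : 1 ≤ M) (hK : 2 ≤ K)
    (μ : Measure (ℝ × ℝ))
    (hμ : μ = (gammaMeasure M 1).prod (expMeasure ((K : ℝ) - 1)))
    (Γup : ℝ → ℝ)
    (hΓ : ∀ s, Γup s = ∫ r in Set.Ioi s, r ^ (M - 1) * Real.exp (-r)) :
    ∀ t : ℝ, 0 < t →
      ((μ {p : ℝ × ℝ | p.2 < p.1 ∧ t < p.2}).toReal =
        (Γup t * Real.exp (-((K : ℝ) - 1) * t) - ((K : ℝ) ^ M)⁻¹ * Γup (K * t)) /
          (M - 1).factorial) ∧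
      ((μ {p : ℝ × ℝ | p.1 < p.2}).toReal +
          (μ {p : ℝ × ℝ | p.2 < p.1 ∧ p.2 < t}).toReal =
        1 - Γup t * Real.exp (-((K : ℝ) - 1) * t) / (M - 1).factorial +
          ((K : ℝ) ^ M)⁻¹ * Γup (K * t) / (M - 1).factorial) := by
  intro t ht
  have hK2 : (2 : ℝ) ≤ (K : ℝ) := by exact_mod_cast hK
  have hlam : (0 : ℝ) < (K : ℝ) - 1 := by linarith
  subst hμ
  haveI hP1 : IsProbabilityMeasure (gammaMeasure (M : ℝ) 1) :=
    isProbabilityMeasure_gammaMeasure (by exact_mod_cast Nat.lt_of_lt_of_le Nat.zero_lt_one hM) one_pos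
  haveI hP2 : IsProbabilityMeasure (expMeasure ((K : ℝ) - 1)) :=
    isProbabilityMeasure_expMeasure hlam
  set μ := (gammaMeasure (M : ℝ) 1).prod (expMeasure ((K : ℝ) - 1)) with hμdef
  have h1 := keyC M K hM hK Γup hΓ t ht
  rw [← hμdef] at h1
  refine ⟨h1, ?_⟩
  set A := {p : ℝ × ℝ | p.1 < p.2} with hA
  set B := {p : ℝ × ℝ | p.2 < p.1 ∧ p.2 < t} with hB
  set C := {p : ℝ × ℝ | p.2 < p.1 ∧ t < p.2} with hC
  have hmA : MeasurableSet A := measurableSet_lt measurable_fst measurable_snd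
  have hmB : MeasurableSet B := (measurableSet_lt measurable_snd measurable_fst).inter
    (measurableSet_lt measurable_snd measurable_const)
  have hmC : MeasurableSet C := (measurableSet_lt measurable_snd measurable_fst).inter
    (measurableSet_lt measurable_const measurable_snd)
  have hdAB : Disjoint A B := Set.disjoint_left.mpr fun p hp hp' => lt_asymm hp hp'.1
  have hdABC : Disjoint (A ∪ B) C := Set.disjoint_left.mpr fun p hp hp' => by
    rcases hp with h | h
    · exact lt_asymm h hp'.1
    · exact lt_asymm h.2 hp'.2
  have hnull : μ ((A ∪ B ∪ C)ᶜ) = 0 := by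
    refine measure_mono_null (t := {p : ℝ × ℝ | p.1 = p.2} ∪ Set.univ ×ˢ {t}) ?_ ?_
    · intro p hp
      simp only [hA, hB, hC, Set.mem_compl_iff, Set.mem_union, Set.mem_setOf_eq, not_or,
        not_and, not_lt] at hp
      obtain ⟨⟨h1', h2'⟩, h3'⟩ := hp
      simp only [Set.mem_union, Set.mem_setOf_eq, Set.mem_prod, Set.mem_univ,
        Set.mem_singleton_iff, true_and]
      rcases lt_or_eq_of_le h1' with h | h
      · exact Or.inr (le_antisymm (h3' h) (h2' h))
      · exact Or.inl h.symm
    · refine measure_union_null ?_ ?_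
      · rw [hμdef, Measure.prod_apply (measurableSet_eq_fun measurable_fst measurable_snd)]
        have hs : ∀ z : ℝ, (Prod.mk z ⁻¹' {p : ℝ × ℝ | p.1 = p.2}) = {z} := fun z => by
          ext u; simp [eq_comm]
        simp_rw [hs, expM_sing]
        exact lintegral_zero
      · rw [hμdef, Measure.prod_prod, expM_sing, mul_zero]
  have hone : μ (A ∪ B ∪ C) = 1 :=
    (prob_compl_eq_zero_iff ((hmA.union hmB).union hmC)).mp hnull
  have hsum : μ A + μ B + μ C = 1 := by
    rw [← measure_union hdAB hmB, ← measure_union hdABC hmC]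
    exact hone
  have hfin : ∀ s : Set (ℝ × ℝ), μ s ≠ ⊤ := fun s => measure_ne_top μ s
  have htr := congrArg ENNReal.toReal hsum
  rw [ENNReal.toReal_add (ENNReal.add_ne_top.mpr ⟨hfin A, hfin B⟩) (hfin C),
    ENNReal.toReal_add (hfin A) (hfin B), ENNReal.toReal_one] at htr
  rw [sub_div] at h1
  linarith [htr, h1]
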